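/- The generalized multivariate Chu–Vandermonde identity: for positive reals a_1,...,a_r and w_1,...,w_r, a natural number n, and a = a_1+···+a_r, ∑ over (n_1,...,n_r) with n_1+···+n_r = n of (n!/(n_1!···n_r!)) ∏_{j=1}^r w_j^{n_j} (a_j)_{n_j} equals w_r^n (a)_n · F, where F = ∑ over (n_1,...,n_{r-1}) with n_1+···+n_{r-1} ≤ n of (-n)_{Σn_j} (a_1)_{n_1}···(a_{r-1})_{n_{r-1}} / (a)_{Σn_j} · ∏_{j=1}^{r-1} (1 - w_j/w_r)^{n_j}/n_j!. -/

import Mathlib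

open Finset Polynomial

lemma asc2 (x y : ℝ) : ∀ m : ℕ, (ascPochhammer ℝ m).eval (x + y) =
    ∑ ij ∈ Finset.HasAntidiagonal.antidiagonal m,
      (m.choose ij.1 : ℝ) * ((ascPochhammer ℝ ij.1).eval x * (ascPochhammer ℝ ij.2).eval y)
  | 0 => by simp
  | (m + 1) => by
    rw [Finset.sum_antidiagonal_choose_succ_mul
        (fun i j => (ascPochhammer ℝ i).eval x * (ascPochhammer ℝ j).eval y) m,
      ascPochhammer_succ_eval, asc2 x y m, Finset.sum_mul, ← Finset.sum_add_distrib]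
    refine Finset.sum_congr rfl fun ij hij => ?_
    have h := Finset.HasAntidiagonal.mem_antidiagonal.mp hij
    have h1 : ij.1 ≤ m := le_of_add_le_left h.le
    have hc : (m.choose ij.2 : ℝ) = (m.choose ij.1 : ℝ) := by
      rw [show ij.2 = m - ij.1 by omega, Nat.choose_symm h1]
    rw [hc, ascPochhammer_succ_eval, ascPochhammer_succ_eval]
    have hm : (m : ℝ) = (ij.1 : ℝ) + ij.2 := by exact_mod_cast h.symm
    rw [hm]; ring

lemma asc_add_eval (x : ℝ) (k m : ℕ) : (ascPochhammer ℝ (k + m)).eval x =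
    (ascPochhammer ℝ k).eval x * (ascPochhammer ℝ m).eval (x + k) := by
  rw [← ascPochhammer_mul, Polynomial.eval_mul, Polynomial.eval_comp]
  simp

lemma vand_multi {ι : Type*} [DecidableEq ι] (b : ι → ℝ) (s : Finset ι) (m : ℕ) :
    ∑ k ∈ s.piAntidiag m, (Nat.multinomial s k : ℝ) *
      ∏ i ∈ s, (ascPochhammer ℝ (k i)).eval (b i) =
    (ascPochhammer ℝ m).eval (∑ i ∈ s, b i) := by
  induction s using Finset.cons_induction generalizing m with
  | empty =>
    cases m with
    | zero => simp
    | succ m => simp [ascPochhammer_eval_zero]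
  | cons a s has ih =>
    rw [Finset.piAntidiag_cons, Finset.sum_disjiUnion, Finset.sum_cons, asc2]
    refine Finset.sum_congr rfl fun p hp => ?_
    have hpm := Finset.HasAntidiagonal.mem_antidiagonal.mp hp
    rw [Finset.sum_map]
    have key : ∀ k ∈ s.piAntidiag p.2,
        (Nat.multinomial (cons a s has) ((addRightEmbedding fun t => if t = a then p.1 else 0) k) : ℝ) *
          ∏ i ∈ cons a s has, (ascPochhammer ℝ
            (((addRightEmbedding fun t => if t = a then p.1 else 0) k) i)).eval (b i) =
        (m.choose p.1 : ℝ) * ((ascPochhammer ℝ p.1).eval (b a) *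
          ((Nat.multinomial s k : ℝ) * ∏ i ∈ s, (ascPochhammer ℝ (k i)).eval (b i))) := by
      intro k hk
      rw [Finset.mem_piAntidiag] at hk
      have hka : k a = 0 := by
        by_contra hka; exact has (hk.2 a hka)
      simp only [addRightEmbedding_apply, Nat.multinomial_cons, Finset.prod_cons,
        Pi.add_apply, hka, if_pos rfl, zero_add]
      have h1 : ∑ i ∈ s, (k i + if i = a then p.1 else 0) = p.2 := by
        rw [Finset.sum_congr rfl (fun i hi => by
          rw [if_neg (ne_of_mem_of_not_mem hi has), add_zero]), hk.1]
      have h2 : Nat.multinomial s (k + fun t => if t = a then p.1 else 0) = Nat.multinomial s k :=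
        Nat.multinomial_congr (fun i hi => by
          simp [ne_of_mem_of_not_mem hi has])
      have h3 : ∏ i ∈ s, (ascPochhammer ℝ (k i + if i = a then p.1 else 0)).eval (b i) =
          ∏ i ∈ s, (ascPochhammer ℝ (k i)).eval (b i) :=
        Finset.prod_congr rfl (fun i hi => by simp [ne_of_mem_of_not_mem hi has])
      rw [h1, h2, h3]; simp only [if_true]; rw [hpm]
      push_cast
      ring
    rw [Finset.sum_congr rfl key, ← Finset.mul_sum, ← Finset.mul_sum, ih]

lemma snoc_sum (r : ℕ) (g : Fin r → ℕ) : ∑ j, (Fin.snoc g 0 : Fin (r+1) → ℕ) j = ∑ j, g j := by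
  rw [Fin.sum_univ_castSucc]
  simp

lemma sum_reindex (r n : ℕ) (F : (Fin (r+1) → ℕ) → (Fin r → ℕ) → ℝ) :
    ∑ f ∈ Finset.Nat.antidiagonalTuple (r+1) n,
      ∑ g ∈ Fintype.piFinset (fun j => Finset.range (f j.castSucc + 1)), F f g =
    ∑ g ∈ (Fintype.piFinset fun _ : Fin r => Finset.range (n+1)).filter (fun g => ∑ j, g j ≤ n),
      ∑ h ∈ Finset.Nat.antidiagonalTuple (r+1) (n - ∑ j, g j), F (h + Fin.snoc g 0) g := by
  rw [Finset.sum_sigma', Finset.sum_sigma']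
  refine Finset.sum_nbij' (i := fun x => ⟨x.2, x.1 - Fin.snoc x.2 0⟩)
    (j := fun x => ⟨x.2 + Fin.snoc x.1 0, x.1⟩) ?_ ?_ ?_ ?_ ?_
  · rintro ⟨f, g⟩ hx
    simp only [Finset.mem_sigma, Finset.Nat.mem_antidiagonalTuple, Fintype.mem_piFinset,
      Finset.mem_range, Finset.mem_filter] at hx ⊢
    obtain ⟨hf, hg⟩ := hx
    have hle : ∀ j : Fin r, g j ≤ f j.castSucc := fun j => Nat.lt_succ_iff.mp (hg j)
    have hfs : ∑ j : Fin r, f j.castSucc ≤ n := by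
      rw [← hf, Fin.sum_univ_castSucc]; omega
    have hgs : ∑ j, g j ≤ n := le_trans (Finset.sum_le_sum fun j _ => hle j) hfs
    refine ⟨⟨fun j => ?_, hgs⟩, ?_⟩
    · have : f j.castSucc ≤ ∑ j : Fin r, f j.castSucc :=
        Finset.single_le_sum (f := fun i : Fin r => f i.castSucc)
          (fun i _ => Nat.zero_le _) (Finset.mem_univ j)
      have := hle j
      omega
    · have hle' : ∀ j : Fin (r+1), (Fin.snoc g 0 : Fin (r+1) → ℕ) j ≤ f j := by
        intro j
        induction j using Fin.lastCases with
        | last => simp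
        | cast i => simpa using hle i
      have := Finset.sum_tsub_distrib (s := Finset.univ)
        (f := f) (g := (Fin.snoc g 0 : Fin (r+1) → ℕ)) (fun i _ => hle' i)
      simp only [Pi.sub_apply] at this ⊢
      rw [this, hf, snoc_sum]
  · rintro ⟨g, h⟩ hx
    simp only [Finset.mem_sigma, Finset.Nat.mem_antidiagonalTuple, Fintype.mem_piFinset,
      Finset.mem_range, Finset.mem_filter] at hx ⊢
    obtain ⟨⟨_, hgs⟩, hh⟩ := hx
    constructor
    · rw [Fin.sum_univ_castSucc] at hh ⊢
      simp only [Pi.add_apply, Fin.snoc_castSucc, Fin.snoc_last, add_zero] at *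
      rw [Finset.sum_add_distrib]
      omega
    · intro j
      simp only [Pi.add_apply, Fin.snoc_castSucc]
      omega
  · rintro ⟨f, g⟩ hx
    simp only [Finset.mem_sigma, Finset.Nat.mem_antidiagonalTuple, Fintype.mem_piFinset,
      Finset.mem_range] at hx
    obtain ⟨hf, hg⟩ := hx
    have hle : ∀ j : Fin (r+1), (Fin.snoc g 0 : Fin (r+1) → ℕ) j ≤ f j := by
      intro j
      induction j using Fin.lastCases with
      | last => simp
      | cast i => simpa using Nat.lt_succ_iff.mp (hg i)
    have h1 : f - Fin.snoc g 0 + Fin.snoc g 0 = f := by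
      funext j
      simp only [Pi.add_apply, Pi.sub_apply]
      exact Nat.sub_add_cancel (hle _)
    simp only [h1]
  · rintro ⟨g, h⟩ hx
    have h2 : h + Fin.snoc g 0 - Fin.snoc g 0 = h := by
      funext j
      simp only [Pi.add_apply, Pi.sub_apply]
      omega
    simp only [h2]
  · rintro ⟨f, g⟩ hx
    simp only [Finset.mem_sigma, Finset.Nat.mem_antidiagonalTuple, Fintype.mem_piFinset,
      Finset.mem_range] at hx
    obtain ⟨hf, hg⟩ := hx
    have hle : ∀ j : Fin (r+1), (Fin.snoc g 0 : Fin (r+1) → ℕ) j ≤ f j := by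
      intro j
      induction j using Fin.lastCases with
      | last => simp
      | cast i => simpa using Nat.lt_succ_iff.mp (hg i)
    congr 1
    ext j
    simp only [Pi.add_apply, Pi.sub_apply]
    exact (Nat.sub_add_cancel (hle _)).symm

lemma fact_ratio (r n : ℕ) (g : Fin r → ℕ) (h : Fin (r + 1) → ℕ)
    (hn : ∑ j, h j + ∑ j, g j = n) :
    ((n.factorial : ℝ) / ∏ j, (((h + Fin.snoc g 0 : Fin (r + 1) → ℕ) j).factorial : ℝ)) *
      ∏ j : Fin r, ((h j.castSucc + g j).choose (g j) : ℝ) =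
    (n.descFactorial (∑ j, g j) : ℝ) * (Nat.multinomial Finset.univ h : ℝ) *
      ∏ j : Fin r, (1 / ((g j).factorial : ℝ)) := by
  have hfne : ∀ k : ℕ, ((k.factorial : ℝ)) ≠ 0 :=
    fun k => Nat.cast_ne_zero.2 k.factorial_ne_zero
  -- multinomial as factorial quotient
  have hmult : (Nat.multinomial Finset.univ h : ℝ) =
      ((∑ j, h j).factorial : ℝ) / ∏ j, ((h j).factorial : ℝ) := by
    rw [eq_div_iff (Finset.prod_ne_zero_iff.2 fun j _ => hfne _)]
    rw_mod_cast [mul_comm, Nat.multinomial_spec]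
  have hdesc : (n.descFactorial (∑ j, g j) : ℝ) =
      (n.factorial : ℝ) / ((∑ j, h j).factorial : ℝ) := by
    rw [eq_div_iff (hfne _)]
    have h1 : ∑ j, g j ≤ n := by omega
    have h2 : n - ∑ j, g j = ∑ j, h j := by omega
    rw_mod_cast [mul_comm, ← h2, Nat.factorial_mul_descFactorial h1]
  have hchoose : ∀ j : Fin r, ((h j.castSucc + g j).choose (g j) : ℝ) =
      ((h j.castSucc + g j).factorial : ℝ) /
        (((g j).factorial : ℝ) * ((h j.castSucc).factorial : ℝ)) := by
    intro j
    rw [Nat.add_comm (h j.castSucc) (g j), Nat.cast_add_choose]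
  have hfprod : ∏ j, (((h + Fin.snoc g 0 : Fin (r + 1) → ℕ) j).factorial : ℝ) =
      (∏ j : Fin r, ((h j.castSucc + g j).factorial : ℝ)) * ((h (Fin.last r)).factorial : ℝ) := by
    rw [Fin.prod_univ_castSucc]
    simp
  have hhprod : ∏ j, ((h j).factorial : ℝ) =
      (∏ j : Fin r, ((h j.castSucc).factorial : ℝ)) * ((h (Fin.last r)).factorial : ℝ) := by
    rw [Fin.prod_univ_castSucc]
  rw [hmult, hdesc, hfprod, hhprod, Finset.prod_congr rfl (fun j _ => hchoose j)]
  rw [Finset.prod_div_distrib, Finset.prod_mul_distrib]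
  have p1 := Finset.prod_ne_zero_iff.2 fun (j : Fin r) (_ : j ∈ Finset.univ) => hfne (h j.castSucc + g j)
  have p2 := Finset.prod_ne_zero_iff.2 fun (j : Fin r) (_ : j ∈ Finset.univ) => hfne (g j)
  have p3 := Finset.prod_ne_zero_iff.2 fun (j : Fin r) (_ : j ∈ Finset.univ) => hfne (h j.castSucc)
  field_simp
  ring
  rw [← Finset.prod_mul_distrib]; exact (Finset.prod_eq_one fun j _ => mul_inv_cancel₀ (hfne _)).symm
theorem generalized_multivariate_chu_vandermonde (r n : ℕ)
    (a w : Fin (r + 1) → ℝ) (ha : ∀ j, 0 < a j) (hw : ∀ j, 0 < w j) :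
    ∑ f ∈ Finset.Nat.antidiagonalTuple (r + 1) n,
        ((Nat.factorial n : ℝ) / ∏ j, (Nat.factorial (f j) : ℝ)) *
          ∏ j, w j ^ f j * (ascPochhammer ℝ (f j)).eval (a j) =
      w (Fin.last r) ^ n * (ascPochhammer ℝ n).eval (∑ j, a j) *
        ∑ f ∈ (Fintype.piFinset fun _ : Fin r => Finset.range (n + 1)).filter
            (fun f => ∑ j, f j ≤ n),
          ((ascPochhammer ℝ (∑ j, f j)).eval (-(n : ℝ)) *
              ∏ j, (ascPochhammer ℝ (f j)).eval (a j.castSucc)) /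
            (ascPochhammer ℝ (∑ j, f j)).eval (∑ j, a j) *
            ∏ j, (1 - w j.castSucc / w (Fin.last r)) ^ f j /
              (Nat.factorial (f j) : ℝ) := by
  classical
  have hW : (0:ℝ) < w (Fin.last r) := hw _
  have hWne : w (Fin.last r) ≠ 0 := ne_of_gt hW
  set W := w (Fin.last r) with hWdef
  have hA : (0:ℝ) < ∑ j, a j := Finset.sum_pos (fun j _ => ha j) Finset.univ_nonempty
  have hb : ∀ (x : ℝ) (m : ℕ), (1 - x) ^ m =
      ∑ i ∈ Finset.range (m + 1), (m.choose i : ℝ) * (-x) ^ i := by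
    intro x m
    rw [sub_eq_add_neg, add_comm, add_pow]
    exact Finset.sum_congr rfl fun i _ => by rw [one_pow]; ring
  have step1 : ∀ f ∈ Finset.Nat.antidiagonalTuple (r + 1) n,
      ((n.factorial : ℝ) / ∏ j, ((f j).factorial : ℝ)) *
        ∏ j, w j ^ f j * (ascPochhammer ℝ (f j)).eval (a j) =
      ∑ g ∈ Fintype.piFinset (fun j : Fin r => Finset.range (f j.castSucc + 1)),
        ((n.factorial : ℝ) / ∏ j, ((f j).factorial : ℝ)) *
          (∏ j : Fin r, ((f j.castSucc).choose (g j) : ℝ) *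
            (-(1 - w j.castSucc / W)) ^ (g j)) *
          (W ^ n * ∏ j, (ascPochhammer ℝ (f j)).eval (a j)) := by
    intro f hf
    have hfs : ∑ j, f j = n := Finset.Nat.mem_antidiagonalTuple.mp hf
    have hwprod : ∏ j, w j ^ f j =
        W ^ n * ∏ j : Fin r, (1 - (1 - w j.castSucc / W)) ^ (f j.castSucc) := by
      conv_rhs => rw [Finset.prod_congr rfl (fun (j : Fin r) _ => by
        rw [show (1 - (1 - w j.castSucc / W)) = w j.castSucc * W⁻¹ by ring, mul_pow])]
      rw [Finset.prod_mul_distrib, Finset.prod_pow_eq_pow_sum]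
      rw [Fin.prod_univ_castSucc (f := fun j => w j ^ f j)]
      rw [← hfs, Fin.sum_univ_castSucc, pow_add]
      field_simp
      ring
      rw [← hWdef, mul_assoc _ (W ^ _) (W⁻¹ ^ _), ← mul_pow, mul_inv_cancel₀ hWne, one_pow, mul_one]
    rw [Finset.prod_mul_distrib, hwprod]
    rw [Finset.prod_congr rfl fun (j : Fin r) _ => hb (1 - w j.castSucc / W) (f j.castSucc)]
    rw [Finset.prod_univ_sum]
    rw [Finset.mul_sum, Finset.sum_mul, Finset.mul_sum]
    exact Finset.sum_congr rfl fun g _ => by ring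
  rw [Finset.sum_congr rfl step1]
  rw [sum_reindex r n (fun f g =>
      ((n.factorial : ℝ) / ∏ j, ((f j).factorial : ℝ)) *
        (∏ j : Fin r, ((f j.castSucc).choose (g j) : ℝ) *
          (-(1 - w j.castSucc / W)) ^ (g j)) *
        (W ^ n * ∏ j, (ascPochhammer ℝ (f j)).eval (a j)))]
  rw [Finset.mul_sum]
  refine Finset.sum_congr rfl fun g hg => ?_
  rw [Finset.mem_filter] at hg
  obtain ⟨hg1, hg2⟩ := hg
  set s := ∑ j, g j with hsdef
  have hPAne : (ascPochhammer ℝ s).eval (∑ j, a j) ≠ 0 :=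
    ne_of_gt (ascPochhammer_pos s _ hA)
  have hsplit : (ascPochhammer ℝ n).eval (∑ j, a j) =
      (ascPochhammer ℝ s).eval (∑ j, a j) *
        (ascPochhammer ℝ (n - s)).eval ((∑ j, a j) + s) := by
    conv_lhs => rw [show n = s + (n - s) by omega]
    exact asc_add_eval _ _ _
  have hvm : (ascPochhammer ℝ (n - s)).eval ((∑ j, a j) + s) =
      ∑ h ∈ Finset.Nat.antidiagonalTuple (r + 1) (n - s),
        (Nat.multinomial Finset.univ h : ℝ) *
          ∏ j, (ascPochhammer ℝ (h j)).eval
            (a j + ((Fin.snoc g 0 : Fin (r + 1) → ℕ) j : ℝ)) := by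
    rw [← Finset.piAntidiag_univ_fin_eq_antidiagonalTuple _ (r + 1),
      vand_multi (fun j => a j + ((Fin.snoc g 0 : Fin (r + 1) → ℕ) j : ℝ)) Finset.univ (n - s)]
    rw [Finset.sum_add_distrib]
    congr 1
    rw [← Nat.cast_sum, snoc_sum]
  have hclear : ∀ Q X T : ℝ,
      W ^ n * ((ascPochhammer ℝ s).eval (∑ j, a j) * Q) *
        (X / (ascPochhammer ℝ s).eval (∑ j, a j) * T) = W ^ n * Q * (X * T) := by
    intro Q X T
    field_simp
  rw [hsplit, hclear, hvm, Finset.mul_sum, Finset.sum_mul]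
  refine Finset.sum_congr rfl fun h hh => ?_
  have hhs : ∑ j, h j = n - s := Finset.Nat.mem_antidiagonalTuple.mp hh
  have hfr := fact_ratio r n g h (by omega)
  have hprodP : ∏ j, (ascPochhammer ℝ ((h + Fin.snoc g 0 : Fin (r + 1) → ℕ) j)).eval (a j) =
      (∏ j : Fin r, (ascPochhammer ℝ (g j)).eval (a j.castSucc)) *
        ∏ j, (ascPochhammer ℝ (h j)).eval (a j + ((Fin.snoc g 0 : Fin (r + 1) → ℕ) j : ℝ)) := by
    rw [Finset.prod_congr rfl fun (j : Fin (r+1)) _ => by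
      show (ascPochhammer ℝ (h j + (Fin.snoc g 0 : Fin (r + 1) → ℕ) j)).eval (a j) = _
      rw [add_comm (h j), asc_add_eval]]
    rw [Finset.prod_mul_distrib]
    congr 1
    rw [Fin.prod_univ_castSucc]
    simp
  have hneg : ∏ j : Fin r, ((h j.castSucc + g j).choose (g j) : ℝ) *
        (-(1 - w j.castSucc / W)) ^ (g j) =
      (∏ j : Fin r, ((h j.castSucc + g j).choose (g j) : ℝ)) *
        ((-1 : ℝ) ^ s * ∏ j : Fin r, (1 - w j.castSucc / W) ^ g j) := by
    rw [Finset.prod_mul_distrib]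
    congr 1
    rw [Finset.prod_congr rfl fun (j : Fin r) _ => by rw [neg_pow]]
    rw [Finset.prod_mul_distrib, Finset.prod_pow_eq_pow_sum]
  have hascneg : (ascPochhammer ℝ s).eval (-(n : ℝ)) =
      (-1 : ℝ) ^ s * (n.descFactorial s : ℝ) := by
    rw [ascPochhammer_eval_neg_eq_descPochhammer, descPochhammer_eval_eq_descFactorial]
  have htdiv : ∏ j : Fin r, (1 - w j.castSucc / W) ^ g j / ((g j).factorial : ℝ) =
      (∏ j : Fin r, (1 - w j.castSucc / W) ^ g j) *
        ∏ j : Fin r, (1 / ((g j).factorial : ℝ)) := by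
    rw [← Finset.prod_mul_distrib]
    exact Finset.prod_congr rfl fun j _ => by ring
  simp only [Pi.add_apply, Fin.snoc_castSucc] at hfr hprodP ⊢
  rw [hprodP, hascneg, htdiv, hneg]
  linear_combination ((-1:ℝ)^s * (∏ j : Fin r, (1 - w j.castSucc / W) ^ g j) *
    (W^n * ((∏ j : Fin r, (ascPochhammer ℝ (g j)).eval (a j.castSucc)) *
      ∏ j, (ascPochhammer ℝ (h j)).eval (a j + ((Fin.snoc g 0 : Fin (r + 1) → ℕ) j : ℝ))))) * hfr
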